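/- arXiv:1803.08106 — 2 statements merged into one kernel-verified Lean document; each statement's English description precedes it below -/
import Mathlib

section
/- Let Ω ⊆ ℝ^d be a nonempty open set, A¹,…,A^d C¹ k×k-matrix-valued functions on Ω with Aʲ(x) Hermitian for all x, and D₀ = Σⱼ ½(AʲDⱼ + DⱼAʲ) with domain C₀¹(Ω)^k in L²(Ω)^k. Suppose Ψ ∈ L²(Ω)^k and there exists Ξ ∈ L²(Ω)^k such that for every open Ω′ compactly contained in Ω there is a sequence (Φₙ) ⊂ C₀¹(Ω)^k with ‖(Φₙ − Ψ)χ_{Ω′}‖ → 0 and ‖(D₀Φₙ − Ξ)χ_{Ω′}‖ → 0. Then ⟪D₀Φ, Ψ⟫ = ⟪Φ, Ξ⟫ for all Φ ∈ C₀¹(Ω)^k; in particular Ψ ∈ D(D₀*) and D₀*Ψ = Ξ. -/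
open MeasureTheory Matrix Set ComplexOrder Filter ENNReal

noncomputable section

/-- `Φ ∈ C₀¹(Ω)^k`: the compactly supported `C¹` functions `Ω → ℂ^k`
(realized as `C¹` functions on `ℝ^d` whose (closed) support is a compact subset of `Ω`). -/
def IsC01 {d k : ℕ} (Ω : Set (Fin d → ℝ)) (Φ : (Fin d → ℝ) → (Fin k → ℂ)) : Prop :=
  ContDiff ℝ 1 Φ ∧ HasCompactSupport Φ ∧ tsupport Φ ⊆ Ω

/-- The `j`-th partial derivative `∂_j`. -/
def pd {d : ℕ} {F : Type*} [NormedAddCommGroup F] [NormedSpace ℝ F]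
    (j : Fin d) (Φ : (Fin d → ℝ) → F) (x : Fin d → ℝ) : F :=
  fderiv ℝ Φ x (Pi.single j 1)

/-- The first order differential operator `D₀ = Σ_j ½ (Aʲ D_j + D_j Aʲ)`, `D_j = -i ∂_j`. -/
def opD0 {d k : ℕ} (A : Fin d → (Fin d → ℝ) → Matrix (Fin k) (Fin k) ℂ)
    (Φ : (Fin d → ℝ) → (Fin k → ℂ)) : (Fin d → ℝ) → (Fin k → ℂ) := fun x =>
  ∑ j, (-(Complex.I) / 2) • ((A j x) *ᵥ pd j Φ x + pd j (fun y => (A j y) *ᵥ Φ y) x)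

/-- The `L²` inner product `⟪Φ, Ψ⟫ = ∫ ⟨Φ(x), Ψ(x)⟩ dx`. -/
def l2inner {d k : ℕ} (Φ Ψ : (Fin d → ℝ) → (Fin k → ℂ)) : ℂ :=
  ∫ x, star (Φ x) ⬝ᵥ Ψ x

/-- The squared `L²` norm `‖Θ‖²`. -/
def l2Sq {d k : ℕ} (Θ : (Fin d → ℝ) → (Fin k → ℂ)) : ℝ :=
  ∫ x, ∑ i, ‖Θ x i‖ ^ 2

/-- The squared `L²` norm of `Θ · χ_s`. -/
def l2SqOn {d k : ℕ} (s : Set (Fin d → ℝ)) (Θ : (Fin d → ℝ) → (Fin k → ℂ)) : ℝ :=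
  ∫ x in s, ∑ i, ‖Θ x i‖ ^ 2

/-- `Ψ ∈ L²(Ω)^k`: square integrable, vanishing outside `Ω`. -/
def IsL2 {d k : ℕ} (Ω : Set (Fin d → ℝ)) (Ψ : (Fin d → ℝ) → (Fin k → ℂ)) : Prop :=
  MeasureTheory.MemLp Ψ 2 volume ∧ ∀ x ∉ Ω, Ψ x = 0

lemma pd_eq_zero_of_nmem {d : ℕ} {F : Type*} [NormedAddCommGroup F] [NormedSpace ℝ F]
    (j : Fin d) (f : (Fin d → ℝ) → F) {x} (hx : x ∉ tsupport f) : pd j f x = 0 := by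
  have h0 : fderiv ℝ f x = 0 := by
    by_contra h
    exact hx (support_fderiv_subset ℝ (Function.mem_support.mpr h))
  simp [pd, h0]

lemma integral_pd_real {d : ℕ} (j : Fin d) (h : (Fin d → ℝ) → ℝ)
    (hreg : ContDiff ℝ 1 h) (hsupp : HasCompactSupport h) :
    ∫ x, pd j h x = 0 := by
  obtain ⟨C, hC⟩ := hreg.lipschitzWith_of_hasCompactSupport hsupp one_ne_zero
  have hconst : LipschitzWith 0 (fun _ : Fin d → ℝ => (1:ℝ)) := LipschitzWith.const' 1
  have key := LipschitzWith.integral_lineDeriv_mul_eq (μ := volume)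
    (f := fun _ => (1:ℝ)) (g := h) hconst hC hsupp (-(Pi.single j 1))
  have h1 : ∀ x : Fin d → ℝ, lineDeriv ℝ (fun _ => (1:ℝ)) x (-(Pi.single j 1)) = 0 := by
    intro x; simp [lineDeriv]
  have h2 : ∀ x : Fin d → ℝ, lineDeriv ℝ h x (-(-(Pi.single j 1))) = pd j h x := by
    intro x
    rw [neg_neg, (hreg.differentiable one_ne_zero x).lineDeriv_eq_fderiv]; rfl
  simp only [h1, h2, zero_mul, integral_zero, mul_one] at key
  exact key.symm

lemma integrable_pd {d : ℕ} {F : Type*} [NormedAddCommGroup F] [NormedSpace ℝ F]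
    (j : Fin d) (h : (Fin d → ℝ) → F)
    (hreg : ContDiff ℝ 1 h) (hsupp : HasCompactSupport h) :
    Integrable (fun x => pd j h x) := by
  apply Continuous.integrable_of_hasCompactSupport
  · exact (hreg.continuous_fderiv one_ne_zero).clm_apply continuous_const
  · exact (hsupp.fderiv ℝ).comp_left (g := fun L : (Fin d → ℝ) →L[ℝ] F => L (Pi.single j 1)) rfl

lemma integral_pd_complex {d : ℕ} (j : Fin d) (h : (Fin d → ℝ) → ℂ)
    (hreg : ContDiff ℝ 1 h) (hsupp : HasCompactSupport h) :
    ∫ x, pd j h x = 0 := by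
  have hint : Integrable (fun x => pd j h x) := integrable_pd j h hreg hsupp
  have main : ∀ (L : ℂ →L[ℝ] ℝ), L (∫ x, pd j h x) = 0 := by
    intro L
    rw [← ContinuousLinearMap.integral_comp_comm L hint]
    have hcomp : ∀ x : Fin d → ℝ, L (pd j h x) = pd j (fun y => L (h y)) x := by
      intro x
      simp only [pd]
      rw [show (fun y => L (h y)) = (⇑L ∘ h) from rfl,
        fderiv_comp x L.differentiableAt (hreg.differentiable one_ne_zero x)]
      simp [ContinuousLinearMap.fderiv]
    rw [integral_congr_ae (Filter.Eventually.of_forall hcomp)]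
    exact integral_pd_real j _ (L.contDiff.comp hreg) (hsupp.comp_left (map_zero L))
  apply Complex.ext
  · simpa [Complex.reCLM_apply] using main Complex.reCLM
  · simpa [Complex.imCLM_apply] using main Complex.imCLM

variable {d k : ℕ}

lemma dotStar_eq_sum (u w : (Fin d → ℝ) → Fin k → ℂ) :
    (fun y => star (u y) ⬝ᵥ w y) = fun y => ∑ i, (starRingEnd ℂ) (u y i) * w y i := by
  funext y; simp [dotProduct, Pi.star_apply, Complex.star_def]

lemma diff_comp_proj {u : (Fin d → ℝ) → Fin k → ℂ} (hu : Differentiable ℝ u) (i : Fin k) :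
    Differentiable ℝ (fun y => u y i) :=
  fun x => ((ContinuousLinearMap.proj (R := ℝ) (φ := fun _ : Fin k => ℂ) i).differentiableAt).comp x (hu x)

lemma diff_conj_comp {u : (Fin d → ℝ) → Fin k → ℂ} (hu : Differentiable ℝ u) (i : Fin k) :
    Differentiable ℝ (fun y => (starRingEnd ℂ) (u y i)) := by
  intro x
  exact (Complex.conjCLE.differentiableAt).comp x (diff_comp_proj hu i x)

lemma pd_comp_proj {u : (Fin d → ℝ) → Fin k → ℂ} (hu : Differentiable ℝ u)
    (j : Fin d) (i : Fin k) (x : Fin d → ℝ) :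
    pd j (fun y => u y i) x = pd j u x i := by
  simp only [pd]
  rw [show (fun y => u y i) = (⇑(ContinuousLinearMap.proj (R := ℝ) (φ := fun _ : Fin k => ℂ) i) ∘ u) from rfl,
    fderiv_comp x (ContinuousLinearMap.differentiableAt _) (hu x)]
  simp [ContinuousLinearMap.fderiv]

lemma pd_conj {u : (Fin d → ℝ) → Fin k → ℂ} (hu : Differentiable ℝ u)
    (j : Fin d) (i : Fin k) (x : Fin d → ℝ) :
    pd j (fun y => (starRingEnd ℂ) (u y i)) x = (starRingEnd ℂ) (pd j u x i) := by
  rw [← pd_comp_proj hu j i x]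
  simp only [pd]
  rw [show (fun y => (starRingEnd ℂ) (u y i)) = (⇑Complex.conjCLE ∘ fun y => u y i) from rfl,
    fderiv_comp x Complex.conjCLE.differentiableAt (diff_comp_proj hu i x)]
  rw [ContinuousLinearMap.comp_apply, ContinuousLinearEquiv.fderiv]; rfl

lemma pd_dotStar (j : Fin d) {u w : (Fin d → ℝ) → Fin k → ℂ} (x : Fin d → ℝ)
    (hu : Differentiable ℝ u) (hw : Differentiable ℝ w) :
    pd j (fun y => star (u y) ⬝ᵥ w y) x
      = star (pd j u x) ⬝ᵥ w x + star (u x) ⬝ᵥ pd j w x := by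
  rw [dotStar_eq_sum]
  have hdi : ∀ i : Fin k, DifferentiableAt ℝ (fun y => (starRingEnd ℂ) (u y i) * w y i) x :=
    fun i => ((diff_conj_comp hu i x).mul (diff_comp_proj hw i x))
  simp only [pd]
  rw [fderiv_fun_sum (fun i _ => hdi i)]
  rw [ContinuousLinearMap.sum_apply]
  have hterm : ∀ i : Fin k,
      (fderiv ℝ (fun y => (starRingEnd ℂ) (u y i) * w y i) x) (Pi.single j 1)
        = (starRingEnd ℂ) (pd j u x i) * w x i + (starRingEnd ℂ) (u x i) * pd j w x i := by
    intro i
    rw [fderiv_fun_mul (diff_conj_comp hu i x) (diff_comp_proj hw i x)]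
    simp only [ContinuousLinearMap.add_apply, ContinuousLinearMap.smul_apply, smul_eq_mul]
    rw [show (fderiv ℝ (fun y => (starRingEnd ℂ) (u y i)) x) (Pi.single j 1)
        = pd j (fun y => (starRingEnd ℂ) (u y i)) x from rfl, pd_conj hu j i x]
    rw [show (fderiv ℝ (fun y => w y i) x) (Pi.single j 1) = pd j (fun y => w y i) x from rfl,
      pd_comp_proj hw j i x]
    ring
  rw [Finset.sum_congr rfl (fun i _ => hterm i)]
  simp only [dotProduct, Pi.star_apply, Complex.star_def]
  rw [← Finset.sum_add_distrib]
  rfl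

lemma pd_add {f g : (Fin d → ℝ) → ℂ} {x} (j : Fin d)
    (hf : DifferentiableAt ℝ f x) (hg : DifferentiableAt ℝ g x) :
    pd j (fun y => f y + g y) x = pd j f x + pd j g x := by
  simp only [pd]
  rw [fderiv_fun_add hf hg]; rfl

lemma contDiff_dotStar {u w : (Fin d → ℝ) → Fin k → ℂ}
    (hu : ContDiff ℝ 1 u) (hw : ContDiff ℝ 1 w) :
    ContDiff ℝ 1 (fun y => star (u y) ⬝ᵥ w y) := by
  rw [dotStar_eq_sum]
  apply ContDiff.sum
  intro i _
  exact ((Complex.conjCLE.contDiff).comp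
    ((ContinuousLinearMap.proj (R := ℝ) (φ := fun _ : Fin k => ℂ) i).contDiff.comp hu)).mul
    ((ContinuousLinearMap.proj (R := ℝ) (φ := fun _ : Fin k => ℂ) i).contDiff.comp hw)

lemma continuous_dotStar {u w : (Fin d → ℝ) → Fin k → ℂ}
    (hu : Continuous u) (hw : Continuous w) :
    Continuous (fun y => star (u y) ⬝ᵥ w y) := by
  rw [dotStar_eq_sum]
  exact continuous_finset_sum _ fun i _ =>
    ((Complex.continuous_conj.comp ((continuous_apply i).comp hu))).mul ((continuous_apply i).comp hw)

lemma continuous_pd {F : Type*} [NormedAddCommGroup F] [NormedSpace ℝ F]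
    (j : Fin d) {f : (Fin d → ℝ) → F} (hf : ContDiff ℝ 1 f) : Continuous (pd j f) :=
  (hf.continuous_fderiv one_ne_zero).clm_apply continuous_const

variable {d k : ℕ} {Ω : Set (Fin d → ℝ)} {A : Fin d → (Fin d → ℝ) → Matrix (Fin k) (Fin k) ℂ}

lemma support_mulVec_subset (m : Fin d) (Φ : (Fin d → ℝ) → Fin k → ℂ) :
    Function.support (fun y => A m y *ᵥ Φ y) ⊆ Function.support Φ := by
  intro y hy
  simp only [Function.mem_support] at *
  intro h0
  exact hy (by rw [h0, Matrix.mulVec_zero])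

lemma tsupport_mulVec_subset (m : Fin d) (Φ : (Fin d → ℝ) → Fin k → ℂ) :
    tsupport (fun y => A m y *ᵥ Φ y) ⊆ tsupport Φ :=
  closure_mono (support_mulVec_subset m Φ)

lemma contDiff_mulVec (hΩ : IsOpen Ω)
    (hAreg : ∀ (m : Fin d) (i j : Fin k), ContDiffOn ℝ 1 (fun x => A m x i j) Ω)
    {Φ} (hΦ : IsC01 Ω Φ) (m : Fin d) :
    ContDiff ℝ 1 (fun y => A m y *ᵥ Φ y) := by
  rw [← contDiffOn_univ]
  apply contDiffOn_of_locally_contDiffOn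
  intro x _
  by_cases hx : x ∈ Ω
  · refine ⟨Ω, hΩ, hx, ?_⟩
    apply ContDiffOn.mono _ inter_subset_right
    have hcomp : ∀ i : Fin k, ContDiffOn ℝ 1 (fun y => ∑ l, A m y i l * Φ y l) Ω := by
      intro i
      apply ContDiffOn.sum
      intro l _
      exact (hAreg m i l).mul
        (((ContinuousLinearMap.proj (R := ℝ) (φ := fun _ : Fin k => ℂ) l).contDiff.comp hΦ.1).contDiffOn)
    have : (fun y => A m y *ᵥ Φ y) = fun y i => ∑ l, A m y i l * Φ y l := by
      funext y i; simp [Matrix.mulVec, dotProduct]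
    rw [this]
    exact contDiffOn_pi.mpr hcomp
  · refine ⟨(tsupport Φ)ᶜ, (isClosed_tsupport Φ).isOpen_compl,
      fun h => hx (hΦ.2.2 h), ?_⟩
    apply (contDiffOn_const (c := (0 : Fin k → ℂ))).congr
    intro y hy
    have : Φ y = 0 := image_eq_zero_of_notMem_tsupport hy.2
    simp [this]

lemma continuousOn_mulVec_pd (hAreg : ∀ (m : Fin d) (i j : Fin k), ContDiffOn ℝ 1 (fun x => A m x i j) Ω)
    {Φ} (hΦreg : ContDiff ℝ 1 Φ) (m j : Fin d) :
    ContinuousOn (fun x => A m x *ᵥ pd j Φ x) Ω := by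
  have hpd : Continuous (pd j Φ) := (hΦreg.continuous_fderiv one_ne_zero).clm_apply continuous_const
  have : (fun x => A m x *ᵥ pd j Φ x) = fun x i => ∑ l, A m x i l * pd j Φ x l := by
    funext y i; simp [Matrix.mulVec, dotProduct]
  rw [this]
  apply continuousOn_pi.mpr
  intro i
  apply continuousOn_finset_sum
  intro l _
  exact ((hAreg m i l).continuousOn).mul ((continuous_apply l).comp hpd).continuousOn

lemma opD0_eq_zero_of_nmem {Φ : (Fin d → ℝ) → Fin k → ℂ} {y : Fin d → ℝ}
    (hy : y ∉ tsupport Φ) : opD0 A Φ y = 0 := by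
  have h1 : ∀ j, pd j Φ y = 0 := fun j => pd_eq_zero_of_nmem j Φ hy
  have h2 : ∀ j : Fin d, pd j (fun z => A j z *ᵥ Φ z) y = 0 := fun j =>
    pd_eq_zero_of_nmem j _ (fun hmem => hy (tsupport_mulVec_subset j Φ hmem))
  simp [opD0, h1, h2]

lemma support_opD0_subset (Φ : (Fin d → ℝ) → Fin k → ℂ) :
    Function.support (opD0 A Φ) ⊆ tsupport Φ := by
  intro y hy
  by_contra h
  exact (Function.mem_support.mp hy) (opD0_eq_zero_of_nmem h)

lemma hasCompactSupport_opD0 {Φ} (hΦ : IsC01 Ω Φ) : HasCompactSupport (opD0 A Φ) := by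
  apply HasCompactSupport.intro hΦ.2.1
  intro y hy
  exact opD0_eq_zero_of_nmem hy

lemma continuous_opD0 (hΩ : IsOpen Ω)
    (hAreg : ∀ (m : Fin d) (i j : Fin k), ContDiffOn ℝ 1 (fun x => A m x i j) Ω)
    {Φ} (hΦ : IsC01 Ω Φ) : Continuous (opD0 A Φ) := by
  rw [continuous_iff_continuousAt]
  intro x
  by_cases hx : x ∈ Ω
  · have hOn : ContinuousOn (opD0 A Φ) Ω := by
      apply continuousOn_finset_sum
      intro j _
      apply ContinuousOn.fun_const_smul
      apply ContinuousOn.add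
      · exact continuousOn_mulVec_pd hAreg hΦ.1 j j
      · exact ((((contDiff_mulVec hΩ hAreg hΦ j)).continuous_fderiv one_ne_zero).clm_apply
          continuous_const).continuousOn
    exact hOn.continuousAt (hΩ.mem_nhds hx)
  · have hx' : x ∉ tsupport Φ := fun h => hx (hΦ.2.2 h)
    have hev : ∀ᶠ y in nhds x, opD0 A Φ y = 0 := by
      filter_upwards [(isClosed_tsupport Φ).isOpen_compl.mem_nhds hx'] with y hy
      exact opD0_eq_zero_of_nmem hy
    exact ContinuousAt.congr continuousAt_const (by filter_upwards [hev] with y hy using hy.symm)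

def auxH {d k : ℕ} (A : Fin d → (Fin d → ℝ) → Matrix (Fin k) (Fin k) ℂ)
    (Φ Φ' : (Fin d → ℝ) → Fin k → ℂ) (j : Fin d) : (Fin d → ℝ) → ℂ :=
  fun y => star (A j y *ᵥ Φ y) ⬝ᵥ Φ' y + star (Φ y) ⬝ᵥ (A j y *ᵥ Φ' y)

lemma tsupport_auxH_subset {Φ Φ' : (Fin d → ℝ) → Fin k → ℂ} (j : Fin d) :
    tsupport (auxH A Φ Φ' j) ⊆ tsupport Φ ∪ tsupport Φ' := by
  apply closure_minimal _ ((isClosed_tsupport Φ).union (isClosed_tsupport Φ'))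
  intro y hy
  by_contra hc
  rw [mem_union] at hc; push_neg at hc
  have h1 : Φ y = 0 := image_eq_zero_of_notMem_tsupport hc.1
  have h2 : Φ' y = 0 := image_eq_zero_of_notMem_tsupport hc.2
  exact (Function.mem_support.mp hy) (by simp [auxH, h1, h2])

lemma sum_dotProduct' {ι : Type*} (s : Finset ι) (v : ι → Fin k → ℂ) (w : Fin k → ℂ) :
    (∑ j ∈ s, v j) ⬝ᵥ w = ∑ j ∈ s, v j ⬝ᵥ w := by
  simp only [dotProduct, Finset.sum_apply, Finset.sum_mul]
  exact Finset.sum_comm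

lemma dotProduct_sum' {ι : Type*} (s : Finset ι) (v : Fin k → ℂ) (w : ι → Fin k → ℂ) :
    v ⬝ᵥ (∑ j ∈ s, w j) = ∑ j ∈ s, v ⬝ᵥ w j := by
  simp only [dotProduct, Finset.sum_apply, Finset.mul_sum]
  exact Finset.sum_comm

lemma opD0_symm (hΩ : IsOpen Ω)
    (hAreg : ∀ (m : Fin d) (i j : Fin k), ContDiffOn ℝ 1 (fun x => A m x i j) Ω)
    (hA : ∀ (m : Fin d), ∀ x ∈ Ω, (A m x).IsHermitian)
    {Φ Φ' : (Fin d → ℝ) → Fin k → ℂ} (hΦ : IsC01 Ω Φ) (hΦ' : IsC01 Ω Φ') :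
    l2inner (opD0 A Φ) Φ' = l2inner Φ (opD0 A Φ') := by
  have hΦd : Differentiable ℝ Φ := hΦ.1.differentiable one_ne_zero
  have hΦ'd : Differentiable ℝ Φ' := hΦ'.1.differentiable one_ne_zero
  have hBreg : ∀ j : Fin d, ContDiff ℝ 1 (fun y => A j y *ᵥ Φ' y) := fun j =>
    contDiff_mulVec hΩ hAreg hΦ' j
  have hCreg : ∀ j : Fin d, ContDiff ℝ 1 (fun y => A j y *ᵥ Φ y) := fun j =>
    contDiff_mulVec hΩ hAreg hΦ j
  have hhreg : ∀ j, ContDiff ℝ 1 (auxH A Φ Φ' j) := fun j =>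
    (contDiff_dotStar (hCreg j) hΦ'.1).add (contDiff_dotStar hΦ.1 (hBreg j))
  have hhsupp : ∀ j, HasCompactSupport (auxH A Φ Φ' j) := by
    intro j
    apply HasCompactSupport.intro (IsCompact.union hΦ.2.1 hΦ'.2.1)
    intro y hy
    rw [mem_union] at hy; push_neg at hy
    simp [auxH, image_eq_zero_of_notMem_tsupport hy.1, image_eq_zero_of_notMem_tsupport hy.2]
  have key : ∀ x, star (opD0 A Φ x) ⬝ᵥ Φ' x - star (Φ x) ⬝ᵥ opD0 A Φ' x
      = ∑ j, (Complex.I/2) * pd j (auxH A Φ Φ' j) x := by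
    intro x
    by_cases hx : x ∈ Ω
    · have hpd : ∀ j, pd j (auxH A Φ Φ' j) x
          = (star (pd j (fun y => A j y *ᵥ Φ y) x) ⬝ᵥ Φ' x
              + star (A j x *ᵥ Φ x) ⬝ᵥ pd j Φ' x)
            + (star (pd j Φ x) ⬝ᵥ (A j x *ᵥ Φ' x)
              + star (Φ x) ⬝ᵥ pd j (fun y => A j y *ᵥ Φ' y) x) := by
        intro j
        have e1 : pd j (auxH A Φ Φ' j) x
            = pd j (fun y => star (A j y *ᵥ Φ y) ⬝ᵥ Φ' y) x
              + pd j (fun y => star (Φ y) ⬝ᵥ (A j y *ᵥ Φ' y)) x :=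
          pd_add j ((contDiff_dotStar (hCreg j) hΦ'.1).differentiable one_ne_zero x)
            ((contDiff_dotStar hΦ.1 (hBreg j)).differentiable one_ne_zero x)
        have e2 : pd j (fun y => star (A j y *ᵥ Φ y) ⬝ᵥ Φ' y) x
            = star (pd j (fun y => A j y *ᵥ Φ y) x) ⬝ᵥ Φ' x
              + star (A j x *ᵥ Φ x) ⬝ᵥ pd j Φ' x :=
          pd_dotStar j x ((hCreg j).differentiable one_ne_zero) hΦ'd
        have e3 : pd j (fun y => star (Φ y) ⬝ᵥ (A j y *ᵥ Φ' y)) x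
            = star (pd j Φ x) ⬝ᵥ (A j x *ᵥ Φ' x)
              + star (Φ x) ⬝ᵥ pd j (fun y => A j y *ᵥ Φ' y) x :=
          pd_dotStar j x hΦd ((hBreg j).differentiable one_ne_zero)
        rw [e1, e2, e3]
      have swap1 : ∀ j, star (pd j Φ x) ⬝ᵥ (A j x *ᵥ Φ' x)
          = star (A j x *ᵥ pd j Φ x) ⬝ᵥ Φ' x := by
        intro j
        rw [Matrix.star_mulVec, (hA j x hx).eq, ← Matrix.dotProduct_mulVec]
      have swap2 : ∀ j, star (A j x *ᵥ Φ x) ⬝ᵥ pd j Φ' x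
          = star (Φ x) ⬝ᵥ (A j x *ᵥ pd j Φ' x) := by
        intro j
        rw [Matrix.star_mulVec, (hA j x hx).eq, ← Matrix.dotProduct_mulVec]
      simp only [opD0, star_sum, sum_dotProduct', dotProduct_sum',
        star_smul, smul_dotProduct, dotProduct_smul, star_add,
        add_dotProduct, dotProduct_add, smul_eq_mul,
        Complex.star_def, map_div₀, map_neg, Complex.conj_I, Complex.conj_ofNat]
      rw [← Finset.sum_sub_distrib]
      refine Finset.sum_congr rfl fun j _ => ?_
      rw [hpd j, swap1 j, swap2 j]
      ring
    · have hx1 : x ∉ tsupport Φ := fun h => hx (hΦ.2.2 h)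
      have hx2 : x ∉ tsupport Φ' := fun h => hx (hΦ'.2.2 h)
      have hpd0 : ∀ j : Fin d, pd j (auxH A Φ Φ' j) x = 0 := fun j =>
        pd_eq_zero_of_nmem j _ (fun hmem => by
          rcases mem_union _ _ _ |>.mp (tsupport_auxH_subset j hmem) with h | h
          exacts [hx1 h, hx2 h])
      simp [image_eq_zero_of_notMem_tsupport hx1, image_eq_zero_of_notMem_tsupport hx2, hpd0]
  have int1 : Integrable (fun x => star (opD0 A Φ x) ⬝ᵥ Φ' x) := by
    apply Continuous.integrable_of_hasCompactSupport
    · exact continuous_dotStar (continuous_opD0 hΩ hAreg hΦ) hΦ'.1.continuous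
    · apply HasCompactSupport.intro hΦ'.2.1
      intro y hy
      simp [image_eq_zero_of_notMem_tsupport hy]
  have int2 : Integrable (fun x => star (Φ x) ⬝ᵥ opD0 A Φ' x) := by
    apply Continuous.integrable_of_hasCompactSupport
    · exact continuous_dotStar hΦ.1.continuous (continuous_opD0 hΩ hAreg hΦ')
    · apply HasCompactSupport.intro hΦ.2.1
      intro y hy
      simp [image_eq_zero_of_notMem_tsupport hy]
  have hsub : l2inner (opD0 A Φ) Φ' - l2inner Φ (opD0 A Φ') = 0 := by
    rw [l2inner, l2inner, ← integral_sub int1 int2]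
    rw [show (fun x => star (opD0 A Φ x) ⬝ᵥ Φ' x - star (Φ x) ⬝ᵥ opD0 A Φ' x)
        = fun x => ∑ j, (Complex.I/2) * pd j (auxH A Φ Φ' j) x from funext key]
    rw [integral_finset_sum _ (fun j _ =>
      ((integrable_pd j (auxH A Φ Φ' j) (hhreg j) (hhsupp j)).const_mul _))]
    apply Finset.sum_eq_zero
    intro j _
    rw [integral_const_mul, integral_pd_complex j _ (hhreg j) (hhsupp j), mul_zero]
  exact sub_eq_zero.mp hsub

lemma aestronglyMeasurable_dotStar {G F : (Fin d → ℝ) → Fin k → ℂ}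
    (hG : Continuous G) (hF : AEStronglyMeasurable F (volume : Measure (Fin d → ℝ))) :
    AEStronglyMeasurable (fun x => star (G x) ⬝ᵥ F x) volume := by
  rw [dotStar_eq_sum]
  apply Finset.aestronglyMeasurable_fun_sum
  intro i _
  exact ((Complex.continuous_conj.comp ((continuous_apply i).comp hG)).aestronglyMeasurable).mul
    ((continuous_apply i).comp_aestronglyMeasurable hF)

lemma norm_dotStar_le {G F : Fin k → ℂ} {M : ℝ} (hM : ∀ i, ‖G i‖ ≤ M) (hM0 : 0 ≤ M) :
    ‖star G ⬝ᵥ F‖ ≤ M * ∑ i, ‖F i‖ := by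
  calc ‖star G ⬝ᵥ F‖ ≤ ∑ i, ‖star (G i) * F i‖ := norm_sum_le _ _
    _ ≤ ∑ i, M * ‖F i‖ := by
        apply Finset.sum_le_sum
        intro i _
        rw [norm_mul, norm_star]
        exact mul_le_mul_of_nonneg_right (hM i) (norm_nonneg _)
    _ = M * ∑ i, ‖F i‖ := (Finset.mul_sum _ _ _).symm

lemma integrable_dotStar_of_memℒp {G F : (Fin d → ℝ) → Fin k → ℂ}
    (hGc : Continuous G) (hGs : HasCompactSupport G)
    (hF : MemLp F 2 (volume : Measure (Fin d → ℝ))) :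
    Integrable (fun x => star (G x) ⬝ᵥ F x) := by
  obtain ⟨M, hM⟩ := hGc.bounded_above_of_compact_support hGs
  have hM0 : 0 ≤ M := le_trans (norm_nonneg _) (hM (fun _ => 0))
  have hKc : IsCompact (tsupport G) := hGs
  have hKm : MeasurableSet (tsupport G) := (isClosed_tsupport G).measurableSet
  haveI : IsFiniteMeasure (volume.restrict (tsupport G)) :=
    ⟨by rw [Measure.restrict_apply_univ]; exact hKc.measure_lt_top⟩
  have hFi : IntegrableOn (fun x => M * (k * ‖F x‖)) (tsupport G) := by
    exact (((hF.restrict _).norm.const_mul (k : ℝ)).const_mul M).integrable (by norm_num)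
  apply Integrable.mono' (hFi.integrable_indicator hKm)
  · exact aestronglyMeasurable_dotStar hGc hF.aestronglyMeasurable
  · apply Filter.Eventually.of_forall
    intro x
    by_cases hx : x ∈ tsupport G
    · rw [indicator_of_mem hx]
      apply (norm_dotStar_le (fun i => (norm_le_pi_norm (G x) i).trans (hM x)) hM0).trans
      apply mul_le_mul_of_nonneg_left _ hM0
      calc ∑ i, ‖F x i‖ ≤ ∑ _i : Fin k, ‖F x‖ :=
            Finset.sum_le_sum fun i _ => norm_le_pi_norm (F x) i
        _ = k * ‖F x‖ := by simp [Finset.sum_const, nsmul_eq_mul]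
    · have hG0 : G x = 0 := image_eq_zero_of_notMem_tsupport hx
      simp [hG0, indicator_of_notMem hx]

lemma key_bound {Ω' : Set (Fin d → ℝ)} (hfin : volume Ω' ≠ ⊤)
    {G v : (Fin d → ℝ) → Fin k → ℂ} (hGsupp : ∀ x ∉ Ω', G x = 0)
    {M : ℝ} (hM0 : 0 ≤ M) (hM : ∀ x i, ‖G x i‖ ≤ M)
    (hv : MemLp v 2 (volume : Measure (Fin d → ℝ))) :
    ‖∫ x, star (G x) ⬝ᵥ v x‖
      ≤ (M * k * Real.sqrt (volume Ω').toReal) * Real.sqrt (l2SqOn Ω' v) := by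
  haveI : IsFiniteMeasure (volume.restrict Ω') :=
    ⟨by rw [Measure.restrict_apply_univ]; exact lt_top_iff_ne_top.mpr hfin⟩
  have h0 : ∀ x ∉ Ω', star (G x) ⬝ᵥ v x = 0 := fun x hx => by
    rw [hGsupp x hx]; simp
  have hsq : ∀ x, Real.sqrt (∑ i, ‖v x i‖ ^ 2) ≤ Real.sqrt (k : ℝ) * ‖v x‖ := by
    intro x
    have h1 : (∑ i, ‖v x i‖ ^ 2) ≤ (k : ℝ) * ‖v x‖ ^ 2 := by
      calc (∑ i, ‖v x i‖ ^ 2) ≤ ∑ _i : Fin k, ‖v x‖ ^ 2 :=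
            Finset.sum_le_sum fun i _ =>
              pow_le_pow_left₀ (norm_nonneg _) (norm_le_pi_norm (v x) i) 2
        _ = (k : ℝ) * ‖v x‖ ^ 2 := by simp [Finset.sum_const, nsmul_eq_mul]
    calc Real.sqrt (∑ i, ‖v x i‖ ^ 2) ≤ Real.sqrt ((k : ℝ) * ‖v x‖ ^ 2) := Real.sqrt_le_sqrt h1
      _ = Real.sqrt (k : ℝ) * ‖v x‖ := by
          rw [Real.sqrt_mul (by positivity), Real.sqrt_sq (norm_nonneg _)]
  have hsqrtMem : MemLp (fun x => Real.sqrt (∑ i, ‖v x i‖ ^ 2)) 2 (volume.restrict Ω') := by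
    apply MemLp.of_le (((hv.restrict Ω').norm.const_mul (Real.sqrt (k : ℝ))))
    · apply Real.continuous_sqrt.comp_aestronglyMeasurable
      apply Finset.aestronglyMeasurable_fun_sum
      intro i _
      exact (((continuous_apply i).comp_aestronglyMeasurable
        (hv.aestronglyMeasurable.restrict)).norm).pow 2
    · apply Filter.Eventually.of_forall
      intro x
      rw [Real.norm_of_nonneg (Real.sqrt_nonneg _)]
      exact (hsq x).trans (le_abs_self _)
  have hsqrtInt : Integrable (fun x => Real.sqrt (∑ i, ‖v x i‖ ^ 2)) (volume.restrict Ω') :=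
    hsqrtMem.integrable (by norm_num)
  have step1 : ‖∫ x, star (G x) ⬝ᵥ v x‖
      ≤ ∫ x in Ω', (M * k) * Real.sqrt (∑ i, ‖v x i‖ ^ 2) := by
    rw [← setIntegral_eq_integral_of_forall_compl_eq_zero h0]
    apply (norm_integral_le_integral_norm _).trans
    apply integral_mono_of_nonneg (Filter.Eventually.of_forall fun x => norm_nonneg _)
      (hsqrtInt.const_mul _)
    apply Filter.Eventually.of_forall
    intro x
    have hb := norm_dotStar_le (fun i => hM x i) hM0 (F := v x)
    apply hb.trans
    have h2 : ∑ i, ‖v x i‖ ≤ (k : ℝ) * Real.sqrt (∑ i, ‖v x i‖ ^ 2) := by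
      calc ∑ i, ‖v x i‖ ≤ ∑ _i : Fin k, Real.sqrt (∑ i, ‖v x i‖ ^ 2) := by
            apply Finset.sum_le_sum
            intro i _
            rw [show ‖v x i‖ = Real.sqrt (‖v x i‖ ^ 2) from (Real.sqrt_sq (norm_nonneg _)).symm]
            apply Real.sqrt_le_sqrt
            exact Finset.single_le_sum (f := fun i => ‖v x i‖ ^ 2)
              (fun i _ => sq_nonneg _) (Finset.mem_univ i)
        _ = (k : ℝ) * Real.sqrt (∑ i, ‖v x i‖ ^ 2) := by simp [Finset.sum_const, nsmul_eq_mul]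
    calc M * ∑ i, ‖v x i‖ ≤ M * ((k : ℝ) * Real.sqrt (∑ i, ‖v x i‖ ^ 2)) :=
          mul_le_mul_of_nonneg_left h2 hM0
      _ = (M * k) * Real.sqrt (∑ i, ‖v x i‖ ^ 2) := by ring
  have step2 : ∫ x in Ω', Real.sqrt (∑ i, ‖v x i‖ ^ 2)
      ≤ Real.sqrt (volume Ω').toReal * Real.sqrt (l2SqOn Ω' v) := by
    have hpq : (2 : ℝ).HolderConjugate 2 := by constructor <;> norm_num
    have hone : MemLp (fun _ : Fin d → ℝ => (1:ℝ)) (ENNReal.ofReal 2) (volume.restrict Ω') := by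
      rw [show ENNReal.ofReal 2 = 2 by simp]
      exact memLp_const 1
    have htwo : MemLp (fun x => Real.sqrt (∑ i, ‖v x i‖ ^ 2)) (ENNReal.ofReal 2)
        (volume.restrict Ω') := by
      rw [show ENNReal.ofReal 2 = 2 by simp]
      exact hsqrtMem
    have := integral_mul_le_Lp_mul_Lq_of_nonneg hpq
      (f := fun _ => (1:ℝ)) (g := fun x => Real.sqrt (∑ i, ‖v x i‖ ^ 2))
      (Filter.Eventually.of_forall fun _ => zero_le_one)
      (Filter.Eventually.of_forall fun x => Real.sqrt_nonneg _) hone htwo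
    simp only [one_mul] at this
    apply this.trans
    have e1 : ∫ _x in Ω', (1:ℝ) ^ (2:ℝ) = (volume Ω').toReal := by
      simp [Measure.restrict_apply_univ, Measure.real]
    have e2 : (∫ x in Ω', Real.sqrt (∑ i, ‖v x i‖ ^ 2) ^ (2:ℝ)) = l2SqOn Ω' v := by
      rw [l2SqOn]
      apply integral_congr_ae (Filter.Eventually.of_forall fun x => ?_)
      rw [show ((2:ℝ) = ((2:ℕ):ℝ)) by norm_num, Real.rpow_natCast,
        Real.sq_sqrt (Finset.sum_nonneg fun i _ => sq_nonneg _)]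
    rw [e1, e2, ← Real.sqrt_eq_rpow, ← Real.sqrt_eq_rpow]
  calc ‖∫ x, star (G x) ⬝ᵥ v x‖ ≤ ∫ x in Ω', (M * k) * Real.sqrt (∑ i, ‖v x i‖ ^ 2) := step1
    _ = (M * k) * ∫ x in Ω', Real.sqrt (∑ i, ‖v x i‖ ^ 2) := integral_const_mul _ _
    _ ≤ (M * k) * (Real.sqrt (volume Ω').toReal * Real.sqrt (l2SqOn Ω' v)) := by
        apply mul_le_mul_of_nonneg_left step2 (by positivity)
    _ = (M * k * Real.sqrt (volume Ω').toReal) * Real.sqrt (l2SqOn Ω' v) := by ring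

lemma tendsto_l2inner {Ω' : Set (Fin d → ℝ)} (hfin : volume Ω' ≠ ⊤)
    {G F : (Fin d → ℝ) → Fin k → ℂ} {Fn : ℕ → (Fin d → ℝ) → Fin k → ℂ}
    (hGsupp : ∀ x ∉ Ω', G x = 0) {M : ℝ} (hM0 : 0 ≤ M) (hM : ∀ x i, ‖G x i‖ ≤ M)
    (hF : MemLp F 2 (volume : Measure (Fin d → ℝ))) (hFn : ∀ n, MemLp (Fn n) 2 volume)
    (hintn : ∀ n, Integrable fun x => star (G x) ⬝ᵥ Fn n x)
    (hintF : Integrable fun x => star (G x) ⬝ᵥ F x)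
    (hconv : Tendsto (fun n => l2SqOn Ω' (fun x => Fn n x - F x)) atTop (nhds 0)) :
    Tendsto (fun n => l2inner G (Fn n)) atTop (nhds (l2inner G F)) := by
  have hdiff : ∀ n, l2inner G (Fn n) - l2inner G F
      = ∫ x, star (G x) ⬝ᵥ (Fn n x - F x) := by
    intro n
    rw [l2inner, l2inner, ← integral_sub (hintn n) hintF]
    apply integral_congr_ae (Filter.Eventually.of_forall fun x => ?_)
    rw [dotProduct_sub]
  have hb : ∀ n, ‖l2inner G (Fn n) - l2inner G F‖
      ≤ (M * k * Real.sqrt (volume Ω').toReal)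
        * Real.sqrt (l2SqOn Ω' (fun x => Fn n x - F x)) := by
    intro n
    rw [hdiff n]
    exact key_bound hfin hGsupp hM0 hM ((hFn n).sub hF)
  have hzero : Tendsto (fun n => l2inner G (Fn n) - l2inner G F) atTop (nhds 0) := by
    apply squeeze_zero_norm hb
    have hs : Tendsto (fun n => Real.sqrt (l2SqOn Ω' (fun x => Fn n x - F x))) atTop (nhds 0) := by
      have := (Real.continuous_sqrt.tendsto 0).comp hconv
      simpa [Function.comp_def] using this
    simpa using hs.const_mul (M * k * Real.sqrt (volume Ω').toReal)
  have := hzero.add_const (l2inner G F)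
  simpa using this


/-- **If `Ψ ∈ 𝓕` with strong limit `Ξ`, then `⟪D₀Φ,Ψ⟫ = ⟪Φ,Ξ⟫` for all `Φ ∈ C₀¹(Ω)^k`;
in particular `Ψ ∈ D(D₀*)` and `D₀*Ψ = Ξ`.** -/
theorem strong_extension_le_weak
    {d k : ℕ} (Ω : Set (Fin d → ℝ)) (hΩ : IsOpen Ω) (hΩne : Ω.Nonempty)
    (A : Fin d → (Fin d → ℝ) → Matrix (Fin k) (Fin k) ℂ)
    (hAreg : ∀ (m : Fin d) (i j : Fin k), ContDiffOn ℝ 1 (fun x => A m x i j) Ω)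
    (hA : ∀ (m : Fin d), ∀ x ∈ Ω, (A m x).IsHermitian)
    (Ψ Ξ : (Fin d → ℝ) → (Fin k → ℂ)) (hΨ : IsL2 Ω Ψ) (hΞ : IsL2 Ω Ξ)
    (happrox : ∀ Ω' : Set (Fin d → ℝ), IsOpen Ω' → (∃ K, IsCompact K ∧ Ω' ⊆ K ∧ K ⊆ Ω) →
      ∃ Φs : ℕ → (Fin d → ℝ) → (Fin k → ℂ), (∀ n, IsC01 Ω (Φs n)) ∧
        Tendsto (fun n => l2SqOn Ω' (fun x => Φs n x - Ψ x)) atTop (nhds 0) ∧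
        Tendsto (fun n => l2SqOn Ω' (fun x => opD0 A (Φs n) x - Ξ x)) atTop (nhds 0)) :
    ∀ Φ, IsC01 Ω Φ → l2inner (opD0 A Φ) Ψ = l2inner Φ Ξ := by
  intro Φ hΦ
  obtain ⟨K, hKc, hK1, hK2⟩ := exists_compact_between hΦ.2.1 hΩ hΦ.2.2
  set Ω' : Set (Fin d → ℝ) := interior K with hΩ'def
  have hΩ'fin : volume Ω' ≠ ⊤ :=
    ((measure_mono interior_subset).trans_lt hKc.measure_lt_top).ne
  obtain ⟨Φs, hΦs, hconv1, hconv2⟩ := happrox Ω' isOpen_interior ⟨K, hKc, interior_subset, hK2⟩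
  -- the test function G₁ = opD0 A Φ
  have hG1c : Continuous (opD0 A Φ) := continuous_opD0 hΩ hAreg hΦ
  have hG1s : HasCompactSupport (opD0 A Φ) := hasCompactSupport_opD0 hΦ
  obtain ⟨M1, hM1⟩ := hG1c.bounded_above_of_compact_support hG1s
  have hM10 : 0 ≤ M1 := le_trans (norm_nonneg _) (hM1 (fun _ => 0))
  have hG1supp : ∀ x ∉ Ω', opD0 A Φ x = 0 := by
    intro x hx
    exact opD0_eq_zero_of_nmem (fun h => hx (hK1 h))
  -- the test function G₂ = Φ
  obtain ⟨M2, hM2⟩ := hΦ.1.continuous.bounded_above_of_compact_support hΦ.2.1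
  have hM20 : 0 ≤ M2 := le_trans (norm_nonneg _) (hM2 (fun _ => 0))
  have hG2supp : ∀ x ∉ Ω', Φ x = 0 := by
    intro x hx
    exact image_eq_zero_of_notMem_tsupport (fun h => hx (hK1 h))
  have hΦsml : ∀ n, MemLp (Φs n) 2 (volume : Measure (Fin d → ℝ)) := fun n =>
    ((hΦs n).1.continuous).memLp_of_hasCompactSupport ((hΦs n).2.1)
  have hDml : ∀ n, MemLp (opD0 A (Φs n)) 2 (volume : Measure (Fin d → ℝ)) := fun n =>
    (continuous_opD0 hΩ hAreg (hΦs n)).memLp_of_hasCompactSupport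
      (hasCompactSupport_opD0 (hΦs n))
  have t2 : Tendsto (fun n => l2inner (opD0 A Φ) (Φs n)) atTop (nhds (l2inner (opD0 A Φ) Ψ)) := by
    apply tendsto_l2inner hΩ'fin hG1supp hM10
      (fun x i => (norm_le_pi_norm _ i).trans (hM1 x)) hΨ.1 hΦsml
      (fun n => integrable_dotStar_of_memℒp hG1c hG1s (hΦsml n))
      (integrable_dotStar_of_memℒp hG1c hG1s hΨ.1) hconv1
  have t3 : Tendsto (fun n => l2inner Φ (opD0 A (Φs n))) atTop (nhds (l2inner Φ Ξ)) := by
    apply tendsto_l2inner hΩ'fin hG2supp hM20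
      (fun x i => (norm_le_pi_norm _ i).trans (hM2 x)) hΞ.1 hDml
      (fun n => integrable_dotStar_of_memℒp hΦ.1.continuous hΦ.2.1 (hDml n))
      (integrable_dotStar_of_memℒp hΦ.1.continuous hΦ.2.1 hΞ.1) hconv2
  have heq : ∀ n, l2inner (opD0 A Φ) (Φs n) = l2inner Φ (opD0 A (Φs n)) := fun n =>
    opD0_symm hΩ hAreg hA hΦ (hΦs n)
  exact tendsto_nhds_unique (t2.congr heq) t3
end
end

section
/- (Velocity matrix for isotropic acoustic waves.) Let K > 0, μ > 0, and let C be the 6×6 real symmetric matrix whose upper-left 3×3 block has diagonal entries K + 4μ/3 and off-diagonal entries K − 2μ/3, whose lower-right 3×3 block is μI₃, and whose off-diagonal blocks vanish. Let a¹, a², a³ be the 6×3 matrices a¹ = [[1,0,0],[0,0,0],[0,0,0],[0,1,0],[0,0,0],[0,0,1]], a² = [[0,0,0],[0,1,0],[0,0,0],[1,0,0],[0,0,1],[0,0,0]], a³ = [[0,0,0],[0,0,0],[0,0,1],[0,0,0],[0,1,0],[1,0,0]]. Then C is positive definite and for all j, l ∈ {1,2,3}: Tr(C^{1/2}aʲ(C^{1/2}aˡ)ᵀ)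 = (K + 10μ/3) δ_{jl}. Consequently, for any ρ > 0, the velocity matrix M with entries M_{jl} = (2/ρ)Tr(C^{1/2}aʲ(C^{1/2}aˡ)ᵀ) equals 2(v_P² + 2v_S²)I₃, where v_P² = (K + 4μ/3)/ρ and v_S² = μ/ρ. -/
open Matrix

noncomputable section

section

open scoped ComplexOrder

/-- The positive semidefinite square root of a positive semidefinite matrix
(restored from the older Mathlib, where it was `Matrix.PosSemidef.sqrt`). -/
def Matrix.PosSemidef.sqrt {n 𝕜 : Type*} [Fintype n] [RCLike 𝕜] [DecidableEq n]
    {A : Matrix n n 𝕜} (hA : A.PosSemidef) : Matrix n n 𝕜 :=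
  hA.1.eigenvectorUnitary.1 * diagonal ((↑) ∘ (√·) ∘ hA.1.eigenvalues) *
    (star hA.1.eigenvectorUnitary : Matrix n n 𝕜)

end

theorem Matrix.PosSemidef.sqrt_isHermitian' {n : Type*} [Fintype n] [DecidableEq n]
    {A : Matrix n n ℝ} (hA : A.PosSemidef) : hA.sqrt.IsHermitian := by
  simp [Matrix.PosSemidef.sqrt, IsHermitian, conjTranspose_mul, Matrix.mul_assoc,
    diagonal_conjTranspose, Matrix.star_eq_conjTranspose]

theorem Matrix.PosSemidef.sqrt_mul_self' {n : Type*} [Fintype n] [DecidableEq n]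
    {A : Matrix n n ℝ} (hA : A.PosSemidef) : hA.sqrt * hA.sqrt = A := by
  conv_rhs => rw [hA.1.spectral_theorem]
  simp only [Matrix.PosSemidef.sqrt, Unitary.conjStarAlgAut_apply]
  have hU : (star hA.1.eigenvectorUnitary : Matrix n n ℝ) * hA.1.eigenvectorUnitary.1 = 1 :=
    Unitary.coe_star_mul_self _
  rw [show ∀ P Q R S T U : Matrix n n ℝ, P * Q * R * (S * T * U) = P * (Q * (R * S) * T) * U by
    intro P Q R S T U; simp only [Matrix.mul_assoc], hU, Matrix.mul_one, diagonal_mul_diagonal]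
  congr 3
  funext i
  simp [Real.mul_self_sqrt (hA.eigenvalues_nonneg i)]

set_option maxHeartbeats 1000000 in
/-- **Velocity matrix for isotropic acoustic waves.** -/
theorem acoustic_velocity_matrix
    (K μ : ℝ) (hK : 0 < K) (hμ : 0 < μ)
    (C : Matrix (Fin 6) (Fin 6) ℝ)
    (hCdef : C = Matrix.reindex finSumFinEquiv finSumFinEquiv
      (Matrix.fromBlocks
        (Matrix.of fun i j : Fin 3 => if i = j then K + 4 * μ / 3 else K - 2 * μ / 3) 0 0
        (μ • (1 : Matrix (Fin 3) (Fin 3) ℝ))))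
    (a : Fin 3 → Matrix (Fin 6) (Fin 3) ℝ)
    (hadef : a = ![!![1,0,0; 0,0,0; 0,0,0; 0,1,0; 0,0,0; 0,0,1],
                   !![0,0,0; 0,1,0; 0,0,0; 1,0,0; 0,0,1; 0,0,0],
                   !![0,0,0; 0,0,0; 0,0,1; 0,0,0; 0,1,0; 1,0,0]]) :
    ∃ hC : C.PosDef,
      (∀ j l : Fin 3,
        Matrix.trace (hC.posSemidef.sqrt * a j * (hC.posSemidef.sqrt * a l)ᵀ)
          = (K + 10 * μ / 3) * (if j = l then 1 else 0)) ∧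
      (∀ ρ : ℝ, 0 < ρ → ∀ j l : Fin 3,
        (2 / ρ) * Matrix.trace (hC.posSemidef.sqrt * a j * (hC.posSemidef.sqrt * a l)ᵀ)
          = 2 * ((K + 4 * μ / 3) / ρ + 2 * (μ / ρ)) * (if j = l then 1 else 0)) := by
  have hCe : C = !![K+4*μ/3, K-2*μ/3, K-2*μ/3, 0,0,0;
           K-2*μ/3, K+4*μ/3, K-2*μ/3, 0,0,0;
           K-2*μ/3, K-2*μ/3, K+4*μ/3, 0,0,0;
           0,0,0, μ,0,0;
           0,0,0, 0,μ,0;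
           0,0,0, 0,0,μ] := by
    subst hCdef
    ext i j
    fin_cases i <;> fin_cases j <;>
      norm_num [Matrix.fromBlocks, finSumFinEquiv, Fin.addCases, Matrix.one_apply,
        Fin.ext_iff, Matrix.vecHead, Matrix.vecTail, Fin.subNat, Fin.castLT]
  have hC : C.PosDef := by
    refine Matrix.PosDef.of_dotProduct_mulVec_pos ?_ ?_
    · rw [Matrix.IsHermitian, Matrix.conjTranspose_eq_transpose_of_trivial, hCe]
      ext i j
      fin_cases i <;> fin_cases j <;> rfl
    · intro x hx
      obtain ⟨i, hi⟩ := Function.ne_iff.mp hx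
      simp only [Pi.zero_apply] at hi
      have hx2 : 0 < x i ^ 2 := lt_of_le_of_ne (sq_nonneg _) (Ne.symm (pow_ne_zero 2 hi))
      have hsum : 0 < ∑ j, x j ^ 2 :=
        Finset.sum_pos' (fun j _ => sq_nonneg _) ⟨i, Finset.mem_univ i, hx2⟩
      rw [Fin.sum_univ_six] at hsum
      have hD : 0 < (x 0 + x 1 + x 2) ^ 2
          ∨ 0 < (x 0 - x 1) ^ 2 + (x 0 - x 2) ^ 2 + (x 1 - x 2) ^ 2
          ∨ 0 < x 3 ^ 2 + x 4 ^ 2 + x 5 ^ 2 := by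
        by_contra h
        push_neg at h
        obtain ⟨h1, h2, h3⟩ := h
        nlinarith [sq_nonneg (x 0), sq_nonneg (x 1), sq_nonneg (x 2), sq_nonneg (x 3),
          sq_nonneg (x 4), sq_nonneg (x 5), sq_nonneg (x 0 - x 1), sq_nonneg (x 0 - x 2),
          sq_nonneg (x 1 - x 2), sq_nonneg (x 0 + x 1 + x 2)]
      have key : star x ⬝ᵥ C *ᵥ x =
          K * (x 0 + x 1 + x 2) ^ 2
          + (2 * μ / 3) * ((x 0 - x 1) ^ 2 + (x 0 - x 2) ^ 2 + (x 1 - x 2) ^ 2)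
          + μ * (x 3 ^ 2 + x 4 ^ 2 + x 5 ^ 2) := by
        simp only [hCe, Matrix.mulVec, dotProduct, Fin.sum_univ_succ,
          Finset.univ_unique, Fin.default_eq_zero, Finset.sum_singleton, Fin.sum_univ_zero,
          Matrix.cons_val_zero, Matrix.cons_val_succ, Pi.star_apply, star_trivial,
          Matrix.cons_val', Matrix.cons_val_fin_one, Matrix.empty_val', Matrix.of_apply, Matrix.vecHead, Matrix.vecTail, Function.comp, Function.comp_apply,
          Fin.succ_zero_eq_one, Fin.succ_one_eq_two,
          show ((2:Fin 5)).succ = 3 from rfl, show ((2:Fin 4)).succ = 3 from rfl,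
          show ((2:Fin 3)).succ = 3 from rfl, show ((3:Fin 5)).succ = 4 from rfl,
          show ((3:Fin 4)).succ = 4 from rfl, show ((4:Fin 5)).succ = 5 from rfl,
          show ((1:Fin 2)).succ = 2 from rfl]
        ring
      rw [key]
      rcases hD with h | h | h
      · nlinarith [mul_pos hK h, mul_nonneg hμ.le (sq_nonneg (x 0 - x 1)),
          mul_nonneg hμ.le (sq_nonneg (x 0 - x 2)), mul_nonneg hμ.le (sq_nonneg (x 1 - x 2)),
          mul_nonneg hμ.le (sq_nonneg (x 3)), mul_nonneg hμ.le (sq_nonneg (x 4)),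
          mul_nonneg hμ.le (sq_nonneg (x 5))]
      · nlinarith [mul_pos hμ h, mul_nonneg hK.le (sq_nonneg (x 0 + x 1 + x 2)),
          mul_nonneg hμ.le (sq_nonneg (x 3)), mul_nonneg hμ.le (sq_nonneg (x 4)),
          mul_nonneg hμ.le (sq_nonneg (x 5))]
      · nlinarith [mul_pos hμ h, mul_nonneg hK.le (sq_nonneg (x 0 + x 1 + x 2)),
          mul_nonneg hμ.le (sq_nonneg (x 0 - x 1)), mul_nonneg hμ.le (sq_nonneg (x 0 - x 2)),
          mul_nonneg hμ.le (sq_nonneg (x 1 - x 2))]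
  have tr_key : ∀ j l : Fin 3, Matrix.trace (C * (a j * (a l)ᵀ))
      = (K + 10 * μ / 3) * (if j = l then 1 else 0) := by
    rw [hCe, hadef]
    intro j l
    fin_cases j <;> fin_cases l <;>
      · simp [Matrix.trace, Matrix.mul_apply, Fin.sum_univ_succ, Matrix.vecMul, dotProduct,
          Matrix.transpose_apply] <;> ring
  have main : ∀ j l : Fin 3,
      Matrix.trace (hC.posSemidef.sqrt * a j * (hC.posSemidef.sqrt * a l)ᵀ)
        = (K + 10 * μ / 3) * (if j = l then 1 else 0) := by
    intro j l
    set S := hC.posSemidef.sqrt with hS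
    have hSymm : Sᵀ = S := by
      have := hC.posSemidef.sqrt_isHermitian'
      rwa [Matrix.IsHermitian, Matrix.conjTranspose_eq_transpose_of_trivial] at this
    have step : S * a j * (S * a l)ᵀ = S * a j * ((a l)ᵀ * S) := by
      rw [Matrix.transpose_mul, hSymm]
    rw [step, ← Matrix.mul_assoc, Matrix.trace_mul_comm, ← Matrix.mul_assoc,
      ← Matrix.mul_assoc, hC.posSemidef.sqrt_mul_self', Matrix.mul_assoc, tr_key]
  refine ⟨hC, main, ?_⟩
  intro ρ hρ j l
  rw [main j l]
  split_ifs with h <;> field_simp <;> ring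
end
end
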